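/- Under the hypotheses of the previous statement ((p⁺,N₀)-divergent LMC, 1/2 < p < p⁺, abstraction by W^p), for every state s outside F ∪ Av_C(F) of level n > N₀ with P⁼(s) < 1, the deficiency 1 − h(s) of the decreasing ratio satisfies 1 − h(s) ≥ ((2p−1)/((1−p)p)) · (P⁻(s)+P⁺(s)) · (p⁺−p) > 0. -/

import Mathlib

open scoped ENNReal NNReal BigOperators
open Filter

noncomputable section

variable {S : Type*}

/-- Probability of following a finite path (list of successive states). -/
def pathProb (P : S → S → ℝ≥0∞) : List S → ℝ≥0∞
  | [] => 1
  | [_] => 1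
  | a :: b :: l => P a b * pathProb P (b :: l)

/-- `l` is a finite path starting at `s` that visits `T` for the first time
at its last element. -/
def FirstHitPath (T : Set S) (s : S) (l : List S) : Prop :=
  l.head? = some s ∧ ∃ h : l ≠ [], l.getLast h ∈ T ∧
    ∀ i : Fin l.length, (i : ℕ) + 1 < l.length → l.get i ∉ T

/-- Probability of eventually reaching `T` from `s`. -/
def reachProb (P : S → S → ℝ≥0∞) (T : Set S) (s : S) : ℝ≥0∞ :=
  ∑' l : {l : List S // FirstHitPath T s l}, pathProb P (l : List S)

/-- The avoid set: states from which `T` is unreachable. -/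
def Av (P : S → S → ℝ≥0∞) (T : Set S) : Set S := {s | reachProb P T s = 0}

/-- Probability that, starting from `s`, the chain stays outside `R`
during its first `n` steps (i.e. the hitting time of `R` is `> n`). -/
def surviveProb (P : S → S → ℝ≥0∞) (R : Set S) (s : S) (n : ℕ) : ℝ≥0∞ :=
  ∑' l : {l : List S // l.length = n + 1 ∧ l.head? = some s ∧ ∀ x ∈ l, x ∉ R},
    pathProb P (l : List S)

/-- Expected hitting time of `R` from `s`, via `E τ = ∑_{n≥0} Pr(τ > n)`. -/
def expHittingTime (P : S → S → ℝ≥0∞) (R : Set S) (s : S) : ℝ≥0∞ :=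
  ∑' n : ℕ, surviveProb P R s n

/-- Probability that `X_i ∈ A` for all `i ≥ m`, starting from `s`
(as the infimum over finite horizons). -/
def confineProb (P : S → S → ℝ≥0∞) (A : Set S) (s : S) (m : ℕ) : ℝ≥0∞ :=
  ⨅ n : ℕ, ∑' l : {l : List S // l.length = n + 1 ∧ l.head? = some s ∧
      ∀ i : Fin l.length, m ≤ (i : ℕ) → l.get i ∈ A}, pathProb P (l : List S)

/-- Expected reward collected at the first visit of `T`. -/
def expReward (P : S → S → ℝ≥0∞) (L : List S → ℝ≥0∞) (T : Set S) (s : S) : ℝ≥0∞ :=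
  ∑' l : {l : List S // FirstHitPath T s l}, L l * pathProb P (l : List S)

/-- `P` is a stochastic matrix. -/
def IsStochastic (P : S → S → ℝ≥0∞) : Prop := ∀ s, ∑' s', P s s' = 1

/-- States of the biased chain other than `s₋`. -/
abbrev SA (P : S → S → ℝ≥0∞) (F : Set S) := {s : S // s ∉ Av P F}

/-- `P'` (on `(S ∖ Av(F)) ⊎ {s₋}`, with `none = s₋`) is a biased Markov chain
of `(C, T, F)`. -/
def IsBiased (P : S → S → ℝ≥0∞) (T F : Set S)
    (P' : Option (SA P F) → Option (SA P F) → ℝ≥0∞) : Prop :=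
  IsStochastic P' ∧
  P' none none = 1 ∧
  (∀ s : SA P F, s.val ∈ T → P' (some s) (some s) = 1) ∧
  (∀ s s' : SA P F, 0 < P s.val s'.val → 0 < P' (some s) (some s'))

/-- `(C^•, F^•)` together with `α` is an abstraction of `(C, F)`. -/
def IsAbstraction (P : S → S → ℝ≥0∞) (F : Set S)
    {S' : Type*} (P' : S' → S' → ℝ≥0∞) (F' : Set S')
    (α : SA P F → S') : Prop :=
  (∀ s : SA P F, s.val ∈ F → α s ∈ F') ∧
  (∀ s : SA P F, s.val ∉ F →
    ∑' s' : SA P F, P s.val s'.val * reachProb P' F' (α s')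
      ≤ reachProb P' F' (α s))

/-- The decreasing ratio `h(s)` of an abstraction. -/
def hRatio (P : S → S → ℝ≥0∞) (F : Set S)
    {S' : Type*} (P' : S' → S' → ℝ≥0∞) (F' : Set S')
    (α : SA P F → S') (s : SA P F) : ℝ≥0∞ :=
  (∑' s' : SA P F, P s.val s'.val * reachProb P' F' (α s'))
    / reachProb P' F' (α s)

/-- The biased Markov chain constructed from an abstraction. -/
def biasedKernel (P : S → S → ℝ≥0∞) (F : Set S)
    {S' : Type*} (P' : S' → S' → ℝ≥0∞) (F' : Set S')
    (α : SA P F → S') :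
    Option (SA P F) → Option (SA P F) → ℝ≥0∞
  | none, none => 1
  | none, some _ => 0
  | some s, none => 1 - hRatio P F P' F' α s
  | some s, some s' =>
      P s.val s'.val * reachProb P' F' (α s') / reachProb P' F' (α s)

/-- The random walk `W^p` on `ℕ`: `0` absorbing, up with probability `p`,
down with probability `1 - p`. -/
def walkKernel (p : ℝ≥0∞) : ℕ → ℕ → ℝ≥0∞ := fun m n =>
  if m = 0 then (if n = 0 then 1 else 0)
  else if n = m + 1 then p
  else if n + 1 = m then 1 - p
  else 0

/-- `(C, λ)` is a layered Markov chain. -/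
def IsLMC (P : S → S → ℝ≥0∞) (lam : S → ℕ) : Prop :=
  (∀ s s', 0 < P s s' → (lam s : ℤ) ≤ (lam s' : ℤ) + 1) ∧
  (∀ n : ℕ, {s : S | lam s = n}.Finite)

/-- Total probability of increasing the level. -/
def Pup (P : S → S → ℝ≥0∞) (lam : S → ℕ) (s : S) : ℝ≥0∞ :=
  ∑' s' : {s' : S // lam s < lam s'}, P s s'

/-- Total probability of decreasing the level (by one). -/
def Pdown (P : S → S → ℝ≥0∞) (lam : S → ℕ) (s : S) : ℝ≥0∞ :=
  ∑' s' : {s' : S // lam s' + 1 = lam s}, P s s'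

/-- Total probability of keeping the same level. -/
def Peq (P : S → S → ℝ≥0∞) (lam : S → ℕ) (s : S) : ℝ≥0∞ :=
  ∑' s' : {s' : S // lam s' = lam s}, P s s'

/-- `(C, λ)` is `(p⁺, N₀)`-divergent. -/
def Divergent (P : S → S → ℝ≥0∞) (lam : S → ℕ) (pplus : ℝ≥0∞) (N₀ : ℕ) : Prop :=
  1/2 < pplus ∧ ∀ s : S, N₀ < lam s → Peq P lam s < 1 →
    pplus ≤ Pup P lam s / (Pdown P lam s + Pup P lam s)

end

section Aux1

variable {S : Type*}

lemma fhp_singleton {T : Set S} {s : S} (hs : s ∈ T) : FirstHitPath T s [s] :=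
  ⟨rfl, List.cons_ne_nil _ _, by simpa using hs, by
    intro i hi
    simp at hi⟩

lemma fhp_eq_singleton {T : Set S} {s : S} {l : List S}
    (hl : FirstHitPath T s l) (hs : s ∈ T) : l = [s] := by
  obtain ⟨hh, hne, hlast, hint⟩ := hl
  match l, hne with
  | a :: t, _ =>
    have ha : a = s := by simpa using hh
    subst ha
    cases t with
    | nil => rfl
    | cons b m =>
      exact absurd hs (hint ⟨0, by simp⟩ (by simp [Nat.succ_lt_succ_iff]))

lemma pathProb_cons (P : S → S → ℝ≥0∞) {b : S} {m : List S} (hm : m.head? = some b)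
    (s : S) : pathProb P (s :: m) = P s b * pathProb P m := by
  cases m with
  | nil => simp at hm
  | cons c t =>
    have : c = b := by simpa using hm
    subst this
    rfl

lemma reachProb_of_mem (P : S → S → ℝ≥0∞) {T : Set S} {s : S} (hs : s ∈ T) :
    reachProb P T s = 1 := by
  rw [reachProb, tsum_eq_single (⟨[s], fhp_singleton hs⟩ :
      {l : List S // FirstHitPath T s l})]
  · rfl
  · intro b hb
    exact absurd (Subtype.ext (fhp_eq_singleton b.2 hs)) hb

lemma fhp_cons {T : Set S} {s b : S} {m : List S} (hs : s ∉ T)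
    (h : FirstHitPath T b m) : FirstHitPath T s (s :: m) := by
  obtain ⟨hh, hne, hlast, hint⟩ := h
  refine ⟨rfl, List.cons_ne_nil _ _, ?_, ?_⟩
  · rw [List.getLast_cons hne]; exact hlast
  · intro i hi
    match i with
    | ⟨0, _⟩ => simpa using hs
    | ⟨j + 1, hj⟩ =>
      have hj' : j + 1 < m.length := by simpa using hi
      have := hint ⟨j, by omega⟩ hj'
      simpa using this

lemma fhp_cons_elim {T : Set S} {s : S} {l : List S} (hs : s ∉ T)
    (h : FirstHitPath T s l) :
    ∃ b m, l = s :: b :: m ∧ FirstHitPath T b (b :: m) := by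
  obtain ⟨hh, hne, hlast, hint⟩ := h
  match l, hne with
  | a :: t, _ =>
    have ha : a = s := by simpa using hh
    subst ha
    cases t with
    | nil => exact absurd (by simpa using hlast) hs
    | cons b m =>
      refine ⟨b, m, rfl, rfl, List.cons_ne_nil _ _, ?_, ?_⟩
      · have := hlast
        rwa [List.getLast_cons (List.cons_ne_nil _ _)] at this
      · intro i hi
        have := hint ⟨(i : ℕ) + 1, by simpa using Nat.succ_lt_succ i.isLt⟩
          (by simpa using Nat.succ_lt_succ hi)
        simpa using this

end Aux1
section Aux2

variable {S : Type*}

lemma reach_decomp (P : S → S → ℝ≥0∞) {T : Set S} {s : S} (hs : s ∉ T)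
    (w : ℕ → ℝ≥0∞) :
    ∑' l : {l : List S // FirstHitPath T s l}, w l.val.length * pathProb P l.val
      = ∑' b : S, P s b *
          ∑' m : {l : List S // FirstHitPath T b l},
            w (m.val.length + 1) * pathProb P m.val := by
  classical
  set g : (Σ b : S, {l : List S // FirstHitPath T b l}) →
      {l : List S // FirstHitPath T s l} :=
    fun x => ⟨s :: x.2.val, fhp_cons hs x.2.prop⟩ with hg
  have hbij : Function.Bijective g := by
    constructor
    · rintro ⟨b, l, hl⟩ ⟨b', l', hl'⟩ h
      have h2 : l = l' := by
        have := congrArg Subtype.val h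
        simpa [hg] using this
      subst h2
      have hb : b = b' := by
        have h1 := hl.1
        have h2 := hl'.1
        rw [h1] at h2
        exact Option.some.inj h2
      subst hb
      rfl
    · rintro ⟨l, hl⟩
      obtain ⟨b, m, rfl, hbm⟩ := fhp_cons_elim hs hl
      exact ⟨⟨b, ⟨b :: m, hbm⟩⟩, rfl⟩
  calc ∑' l : {l : List S // FirstHitPath T s l}, w l.val.length * pathProb P l.val
      = ∑' x : Σ b : S, {l : List S // FirstHitPath T b l},
          w (g x).val.length * pathProb P (g x).val :=
        ((Equiv.ofBijective g hbij).tsum_eq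
          (fun l : {l : List S // FirstHitPath T s l} =>
            w l.val.length * pathProb P l.val)).symm
    _ = ∑' x : Σ b : S, {l : List S // FirstHitPath T b l},
          P s x.1 * (w (x.2.val.length + 1) * pathProb P x.2.val) := by
        refine tsum_congr fun x => ?_
        have hhead : x.2.val.head? = some x.1 := x.2.prop.1
        have : pathProb P (s :: x.2.val) = P s x.1 * pathProb P x.2.val :=
          pathProb_cons P hhead s
        simp only [hg, List.length_cons, this]
        ring
    _ = ∑' b : S, ∑' m : {l : List S // FirstHitPath T b l},
          P s b * (w (m.val.length + 1) * pathProb P m.val) := by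
        exact ENNReal.tsum_sigma' _
    _ = _ := by
        refine tsum_congr fun b => ?_
        rw [ENNReal.tsum_mul_left]

end Aux2
section Aux3

lemma walk_sum (p : ℝ≥0∞) {n : ℕ} (hn : 1 ≤ n) (f : ℕ → ℝ≥0∞) :
    ∑' b : ℕ, walkKernel p n b * f b = p * f (n + 1) + (1 - p) * f (n - 1) := by
  classical
  have hne : n ≠ 0 := by omega
  rw [tsum_eq_sum (s := ({n + 1, n - 1} : Finset ℕ)) ?_]
  · rw [Finset.sum_pair (by omega : n + 1 ≠ n - 1)]
    have h1 : walkKernel p n (n + 1) = p := by simp [walkKernel, hne]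
    have h2 : walkKernel p n (n - 1) = 1 - p := by
      simp only [walkKernel, if_neg hne]
      rw [if_neg (by omega), if_pos (by omega)]
    rw [h1, h2]
  · intro b hb
    simp only [Finset.mem_insert, Finset.mem_singleton, not_or] at hb
    have : walkKernel p n b = 0 := by
      simp only [walkKernel, if_neg hne]
      rw [if_neg hb.1, if_neg (by omega)]
    rw [this, zero_mul]

section Walk

variable {p : ℝ≥0∞} (hp half : 1 / 2 < p) (hp1 : p < 1)

lemma two_p_ge_one {p : ℝ≥0∞} (hp : 1 / 2 < p) : 1 < 2 * p := by
  have := (ENNReal.div_lt_iff (by norm_num) (by norm_num)).mp hp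
  calc (1 : ℝ≥0∞) = 1 / 2 * 2 := (ENNReal.div_mul_cancel (by norm_num) (by norm_num)).symm
  _ < p * 2 := ENNReal.mul_lt_mul_left (by norm_num) (by norm_num) hp
  _ = 2 * p := mul_comm _ _

lemma kappa_identity {p : ℝ≥0∞} (hp : 1 / 2 < p) (hp1 : p < 1) :
    p * ((1 - p) / p) ^ 2 + (1 - p) = (1 - p) / p := by
  have hp0 : p ≠ 0 := by
    intro h; rw [h] at hp; exact absurd hp (by simp)
  have hpt : p ≠ ∞ := (hp1.trans (by norm_num)).ne
  have h1 : p * ((1 - p) / p) = 1 - p := ENNReal.mul_div_cancel hp0 hpt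
  have h2 : (1 - p) / p + 1 = 1 / p := by
    nth_rewrite 2 [show (1:ℝ≥0∞) = p / p from (ENNReal.div_self hp0 hpt).symm]
    rw [ENNReal.div_add_div_same, tsub_add_cancel_of_le hp1.le]
  calc p * ((1 - p) / p) ^ 2 + (1 - p)
      = (1 - p) * ((1 - p) / p) + (1 - p) * 1 := by
        rw [pow_two, ← mul_assoc, h1, mul_one]
    _ = (1 - p) * ((1 - p) / p + 1) := (mul_add _ _ _).symm
    _ = (1 - p) * (1 / p) := by rw [h2]
    _ = (1 - p) / p := by rw [one_div, div_eq_mul_inv]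

end Walk

end Aux3
section Aux4

/-- Finite-horizon first-hit probability for the walk. -/
noncomputable def uHor (p : ℝ≥0∞) (N₀ m n : ℕ) : ℝ≥0∞ :=
  ∑' l : {l : List ℕ // FirstHitPath (Set.Iic N₀) n l},
    (if l.val.length ≤ m + 1 then 1 else 0) * pathProb (walkKernel p) l.val

lemma uHor_le_one {p : ℝ≥0∞} {N₀ n : ℕ} (hn : n ≤ N₀) (m : ℕ) :
    uHor p N₀ m n ≤ 1 := by
  have hmem : n ∈ Set.Iic N₀ := hn
  rw [uHor, tsum_eq_single (⟨[n], fhp_singleton hmem⟩ :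
      {l : List ℕ // FirstHitPath (Set.Iic N₀) n l})]
  · have : pathProb (walkKernel p) [n] = 1 := rfl
    rw [this, mul_one]
    split <;> simp
  · intro b hb
    exact absurd (Subtype.ext (fhp_eq_singleton b.2 hmem)) hb

lemma uHor_zero {p : ℝ≥0∞} {N₀ n : ℕ} (hn : N₀ < n) :
    uHor p N₀ 0 n = 0 := by
  rw [uHor, ENNReal.tsum_eq_zero]
  rintro ⟨l, hl⟩
  obtain ⟨hh, hne, hlast, -⟩ := hl
  have : ¬ l.length ≤ 0 + 1 := by
    intro hlen
    match l, hne with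
    | [a], _ =>
      have ha : a = n := by simpa using hh
      have : a ∈ Set.Iic N₀ := by simpa using hlast
      rw [ha] at this
      exact absurd this (by simpa using hn.not_ge)
    | a :: b :: t, _ => simp at hlen
  simp [this]

lemma uHor_succ {p : ℝ≥0∞} {N₀ n : ℕ} (hn : N₀ < n) (m : ℕ) :
    uHor p N₀ (m + 1) n
      = p * uHor p N₀ m (n + 1) + (1 - p) * uHor p N₀ m (n - 1) := by
  have hs : n ∉ Set.Iic N₀ := by simpa using hn.not_ge
  have h1 : uHor p N₀ (m + 1) n = ∑' b : ℕ, walkKernel p n b * uHor p N₀ m b := by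
    rw [uHor]
    rw [reach_decomp (walkKernel p) hs (fun len => if len ≤ m + 1 + 1 then 1 else 0)]
    refine tsum_congr fun b => ?_
    congr 1
    refine tsum_congr fun l => ?_
    congr 1
    simp [Nat.add_le_add_iff_right]
  rw [h1, walk_sum p (by omega) (uHor p N₀ m)]

lemma uHor_bound {p : ℝ≥0∞} (hp : 1 / 2 < p) (hp1 : p < 1) (N₀ : ℕ) :
    ∀ m k, uHor p N₀ m (N₀ + k) ≤ ((1 - p) / p) ^ k := by
  intro m
  induction m with
  | zero =>
    intro k
    cases k with
    | zero => simpa using uHor_le_one le_rfl 0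
    | succ j => rw [uHor_zero (by omega)]; exact zero_le
  | succ m ih =>
    intro k
    cases k with
    | zero => simpa using uHor_le_one le_rfl (m + 1)
    | succ j =>
      rw [uHor_succ (by omega) m]
      have e1 : N₀ + (j + 1) + 1 = N₀ + (j + 2) := by omega
      have e2 : N₀ + (j + 1) - 1 = N₀ + j := by omega
      rw [e1, e2]
      calc p * uHor p N₀ m (N₀ + (j + 2)) + (1 - p) * uHor p N₀ m (N₀ + j)
          ≤ p * ((1 - p) / p) ^ (j + 2) + (1 - p) * ((1 - p) / p) ^ j := by
            gcongr <;> exact ih _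
        _ = (p * ((1 - p) / p) ^ 2 + (1 - p)) * ((1 - p) / p) ^ j := by ring
        _ = ((1 - p) / p) ^ (j + 1) := by rw [kappa_identity hp hp1]; ring

lemma mu_le {p : ℝ≥0∞} (hp : 1 / 2 < p) (hp1 : p < 1) (N₀ k : ℕ) :
    reachProb (walkKernel p) (Set.Iic N₀) (N₀ + k) ≤ ((1 - p) / p) ^ k := by
  rw [reachProb, ENNReal.tsum_eq_iSup_sum]
  refine iSup_le fun F => ?_
  set M := F.sup (fun l => l.val.length) with hM
  calc ∑ l ∈ F, pathProb (walkKernel p) l.val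
      = ∑ l ∈ F, (if l.val.length ≤ M + 1 then 1 else 0) *
          pathProb (walkKernel p) l.val := by
        refine Finset.sum_congr rfl fun l hl => ?_
        have : l.val.length ≤ M := Finset.le_sup (f := fun l => l.val.length) hl
        rw [if_pos (by omega), one_mul]
    _ ≤ uHor p N₀ M (N₀ + k) := ENNReal.sum_le_tsum F
    _ ≤ ((1 - p) / p) ^ k := uHor_bound hp hp1 N₀ M k

end Aux4
section Aux5

lemma mu_rec (p : ℝ≥0∞) {N₀ n : ℕ} (hn : N₀ < n) :
    reachProb (walkKernel p) (Set.Iic N₀) n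
      = p * reachProb (walkKernel p) (Set.Iic N₀) (n + 1)
        + (1 - p) * reachProb (walkKernel p) (Set.Iic N₀) (n - 1) := by
  have hs : n ∉ Set.Iic N₀ := by simpa using hn.not_ge
  have h1 : ∀ m : ℕ, reachProb (walkKernel p) (Set.Iic N₀) m
      = ∑' l : {l : List ℕ // FirstHitPath (Set.Iic N₀) m l},
          (fun _ : ℕ => (1 : ℝ≥0∞)) l.val.length * pathProb (walkKernel p) l.val := by
    intro m
    rw [reachProb]
    exact tsum_congr fun l => (one_mul _).symm
  rw [h1, reach_decomp (walkKernel p) hs (fun _ => 1)]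
  have h2 : ∀ b : ℕ, (∑' m : {l : List ℕ // FirstHitPath (Set.Iic N₀) b l},
      (fun _ : ℕ => (1 : ℝ≥0∞)) (m.val.length + 1) * pathProb (walkKernel p) m.val)
      = reachProb (walkKernel p) (Set.Iic N₀) b := by
    intro b
    rw [reachProb]
    exact tsum_congr fun l => one_mul _
  calc ∑' b : ℕ, walkKernel p n b * _ = ∑' b : ℕ, walkKernel p n b *
        reachProb (walkKernel p) (Set.Iic N₀) b := tsum_congr fun b => by rw [h2]
    _ = _ := walk_sum p (by omega) _

lemma mu_eq {p : ℝ≥0∞} (hp : 1 / 2 < p) (hp1 : p < 1) (N₀ : ℕ) (k : ℕ) :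
    reachProb (walkKernel p) (Set.Iic N₀) (N₀ + k) = ((1 - p) / p) ^ k := by
  have hp0 : p ≠ 0 := by
    intro h; rw [h] at hp; exact absurd hp (by simp)
  have hpt : p ≠ ∞ := (hp1.trans (by norm_num)).ne
  set κ : ℝ≥0∞ := (1 - p) / p with hκ
  set μ : ℕ → ℝ≥0∞ := fun j => reachProb (walkKernel p) (Set.Iic N₀) (N₀ + j) with hμ
  have hκt : κ ≠ ∞ := by
    rw [hκ]
    exact (ENNReal.div_lt_top (ne_top_of_le_ne_top ENNReal.one_ne_top tsub_le_self) hp0).ne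
  have hμ0 : μ 0 = 1 := reachProb_of_mem _ (by simp)
  have hle : ∀ j, μ j ≤ κ ^ j := fun j => mu_le hp hp1 N₀ j
  have hfin : ∀ j, μ j ≠ ∞ := by
    intro j
    exact ((hle j).trans_lt (ENNReal.pow_lt_top hκt.lt_top (n := j))).ne
  have hrec : ∀ j, μ (j + 1) = p * μ (j + 2) + (1 - p) * μ j := by
    intro j
    have := mu_rec p (N₀ := N₀) (n := N₀ + j + 1) (by omega)
    have e1 : N₀ + j + 1 + 1 = N₀ + (j + 2) := by omega
    have e2 : N₀ + j + 1 - 1 = N₀ + j := by omega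
    rw [e1, e2] at this
    simpa [hμ, Nat.add_assoc] using this
  -- move to the reals
  set r : ℝ := p.toReal with hr
  have hr1 : r < 1 := by
    have := (ENNReal.toReal_lt_toReal hpt (by norm_num : (1:ℝ≥0∞) ≠ ∞)).mpr hp1
    simpa using this
  have hr2 : 1 / 2 < r := by
    have := (ENNReal.toReal_lt_toReal (by norm_num : (1:ℝ≥0∞)/2 ≠ ∞) hpt).mpr hp
    simpa [ENNReal.toReal_div] using this
  have hr0 : (0:ℝ) < r := by linarith
  set c : ℝ := κ.toReal with hcdef
  have hc : c = (1 - r) / r := by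
    rw [hcdef, hκ, ENNReal.toReal_div, ENNReal.toReal_sub_of_le hp1.le (by norm_num)]
    simp [hr]
  have hc0 : 0 < c := by rw [hc]; exact div_pos (by linarith) hr0
  have hc1 : c < 1 := by rw [hc]; rw [div_lt_one hr0]; linarith
  set b : ℕ → ℝ := fun j => (μ j).toReal with hb
  have hb0 : b 0 = 1 := by rw [hb]; simp [hμ0]
  have hbnn : ∀ j, 0 ≤ b j := fun j => ENNReal.toReal_nonneg
  have hble : ∀ j, b j ≤ c ^ j := by
    intro j
    have := ENNReal.toReal_mono (ENNReal.pow_ne_top hκt) (hle j)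
    rwa [ENNReal.toReal_pow] at this
  have hbrec : ∀ j, b (j + 1) = r * b (j + 2) + (1 - r) * b j := by
    intro j
    have h := congrArg ENNReal.toReal (hrec j)
    rw [ENNReal.toReal_add (ENNReal.mul_ne_top hpt (hfin (j+2)))
      (ENNReal.mul_ne_top (ne_top_of_le_ne_top ENNReal.one_ne_top tsub_le_self) (hfin j)),
      ENNReal.toReal_mul, ENNReal.toReal_mul,
      ENNReal.toReal_sub_of_le hp1.le (by norm_num)] at h
    simpa [hb, hr] using h
  set d : ℕ → ℝ := fun j => b j - b (j + 1) with hd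
  have hdstep : ∀ j, d (j + 1) = c * d j := by
    intro j
    simp only [hd]
    rw [hc, div_mul_eq_mul_div, eq_div_iff hr0.ne']
    linear_combination hbrec j
  have hdk : ∀ j, d j = c ^ j * d 0 := by
    intro j
    induction j with
    | zero => simp
    | succ i ih => rw [hdstep i, ih]; ring
  have hbk : ∀ j, b j = 1 - d 0 * ∑ i ∈ Finset.range j, c ^ i := by
    intro j
    induction j with
    | zero => simp [hb0]
    | succ i ih =>
      have : b (i + 1) = b i - d i := by rw [hd]; ring
      rw [this, ih, hdk i, Finset.sum_range_succ]
      ring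
  have hgeom : Filter.Tendsto (fun j : ℕ => c ^ j) atTop (nhds 0) :=
    tendsto_pow_atTop_nhds_zero_of_lt_one hc0.le hc1
  have hsum : Filter.Tendsto (fun j : ℕ => ∑ i ∈ Finset.range j, c ^ i) atTop
      (nhds (1 - c)⁻¹) :=
    (hasSum_geometric_of_lt_one hc0.le hc1).tendsto_sum_nat
  have h1c : (0:ℝ) < 1 - c := by linarith
  have hd0ge : 1 - c ≤ d 0 := by
    have hlim1 : Filter.Tendsto (fun j : ℕ => 1 - d 0 * ∑ i ∈ Finset.range j, c ^ i)
        atTop (nhds (1 - d 0 * (1 - c)⁻¹)) := by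
      exact (tendsto_const_nhds.sub ((tendsto_const_nhds.mul hsum)))
    have hle' : 1 - d 0 * (1 - c)⁻¹ ≤ 0 :=
      le_of_tendsto_of_tendsto' hlim1 hgeom (fun j => by rw [← hbk j]; exact hble j)
    have : 1 ≤ d 0 * (1 - c)⁻¹ := by linarith
    calc 1 - c = (1 - c) * 1 := by ring
      _ ≤ (1 - c) * (d 0 * (1 - c)⁻¹) := by nlinarith
      _ = d 0 := by field_simp
  have hd0le : d 0 ≤ 1 - c := by
    have hlim1 : Filter.Tendsto (fun j : ℕ => d 0 * ∑ i ∈ Finset.range j, c ^ i)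
        atTop (nhds (d 0 * (1 - c)⁻¹)) := tendsto_const_nhds.mul hsum
    have hle' : d 0 * (1 - c)⁻¹ ≤ 1 := by
      refine le_of_tendsto_of_tendsto' hlim1 tendsto_const_nhds (fun j => ?_)
      have := hbnn j
      rw [hbk j] at this
      linarith
    calc d 0 = (1 - c) * (d 0 * (1 - c)⁻¹) := by field_simp
      _ ≤ (1 - c) * 1 := by nlinarith
      _ = 1 - c := by ring
  have hd0 : d 0 = 1 - c := le_antisymm hd0le hd0ge
  have hbfinal : ∀ j, b j = c ^ j := by
    intro j
    rw [hbk j, hd0, geom_sum_eq hc1.ne j]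
    field_simp [sub_ne_zero.mpr hc1.ne]
    ring
  have : (μ k).toReal = (κ ^ k).toReal := by
    rw [ENNReal.toReal_pow]; exact hbfinal k
  exact (ENNReal.toReal_eq_toReal_iff' (hfin k) (ENNReal.pow_ne_top hκt)).mp this

end Aux5
section Aux6

variable {S : Type*}

lemma tsum_level_split {α : Type*} (f : α → ℝ≥0∞) (g : α → ℕ) (n : ℕ) :
    ∑' x : α, f x
      = (∑' x : {x : α // g x + 1 = n}, f x.val)
        + (∑' x : {x : α // g x = n}, f x.val)
        + (∑' x : {x : α // n < g x}, f x.val)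
        + (∑' x : {x : α // g x + 1 < n}, f x.val) := by
  classical
  have key : ∀ x : α, f x
      = ({x : α | g x + 1 = n}.indicator f x + {x : α | g x = n}.indicator f x)
        + ({x : α | n < g x}.indicator f x + {x : α | g x + 1 < n}.indicator f x) := by
    intro x
    simp only [Set.indicator_apply, Set.mem_setOf_eq]
    rcases lt_trichotomy (g x) n with h | h | h
    · rcases Nat.lt_or_ge (g x + 1) n with h2 | h2
      · rw [if_neg (by omega), if_neg (by omega), if_neg (by omega), if_pos h2]; simp
      · rw [if_pos (by omega), if_neg (by omega), if_neg (by omega), if_neg (by omega)]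
        simp
    · rw [if_neg (by omega), if_pos (by omega), if_neg (by omega), if_neg (by omega)]
      simp
    · rw [if_neg (by omega), if_neg (by omega), if_pos h, if_neg (by omega)]; simp
  calc ∑' x : α, f x
      = ∑' x : α, (({x : α | g x + 1 = n}.indicator f x + {x : α | g x = n}.indicator f x)
          + ({x : α | n < g x}.indicator f x + {x : α | g x + 1 < n}.indicator f x)) :=
        tsum_congr key
    _ = _ := by
        rw [ENNReal.tsum_add, ENNReal.tsum_add, ENNReal.tsum_add,
          ← tsum_subtype, ← tsum_subtype, ← tsum_subtype, ← tsum_subtype,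
          ← add_assoc]
        rfl

lemma tsum_sa_le (P : S → S → ℝ≥0∞) (F : Set S) (f : S → ℝ≥0∞) (Q : S → Prop) :
    ∑' x : {x : SA P F // Q x.val}, f x.val.val ≤ ∑' x : {x : S // Q x}, f x.val := by
  refine ENNReal.summable.tsum_le_tsum_of_inj (fun x => ⟨x.val.val, x.prop⟩)
    (fun a b hab => ?_) (fun _ _ => zero_le) (fun _ => le_rfl)
    ENNReal.summable
  simp only [Subtype.mk.injEq] at hab
  exact Subtype.ext (Subtype.ext hab)

lemma real_ineq (r q dr er ur : ℝ) (hr2 : 1 / 2 < r) (hr1 : r < 1) (hq : q ≤ 1)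
    (hrq : r < q) (hdr : 0 ≤ dr) (her : 0 ≤ er) (hur : 0 ≤ ur)
    (hsum : dr + er + ur = 1) (hdivg : q * (dr + ur) ≤ ur) :
    (2 * r - 1) / ((1 - r) * r) * (dr + ur) * (q - r)
      + (dr / ((1 - r) / r) + er + ur * ((1 - r) / r)) ≤ 1 := by
  have h1 : (0:ℝ) < r := by linarith
  have h2 : (0:ℝ) < 1 - r := by linarith
  have key : (2 * r - 1) / ((1 - r) * r) * (dr + ur) * (q - r)
      + (dr / ((1 - r) / r) + er + ur * ((1 - r) / r))
      = ((2 * r - 1) * (dr + ur) * (q - r) + dr * r ^ 2 + er * (1 - r) * r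
          + ur * (1 - r) ^ 2) / ((1 - r) * r) := by
    field_simp
    ring
  rw [key, div_le_one (by positivity)]
  nlinarith [mul_nonneg (by linarith : (0:ℝ) ≤ 2 * r - 1)
    (by linarith : (0:ℝ) ≤ ur - q * (dr + ur))]

end Aux6

open scoped Classical

section Thms

variable {S : Type*}

theorem stmt13 [Countable S] (P : S → S → ℝ≥0∞) (hP : IsStochastic P)
    (lam : S → ℕ) (hlmc : IsLMC P lam)
    (pplus p : ℝ≥0∞) (N₀ : ℕ) (hdiv : Divergent P lam pplus N₀)
    (hple : pplus ≤ 1) (hp1 : 1/2 < p) (hp2 : p < pplus) :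
    ∀ s : SA P {s : S | lam s ≤ N₀}, N₀ < lam s.val → Peq P lam s.val < 1 →
      (2 * p - 1) / ((1 - p) * p) * (Pdown P lam s.val + Pup P lam s.val) *
          (pplus - p)
        ≤ 1 - hRatio P {s : S | lam s ≤ N₀} (walkKernel p) (Set.Iic N₀)
            (fun s => lam s.val) s ∧
      0 < (2 * p - 1) / ((1 - p) * p) *
            (Pdown P lam s.val + Pup P lam s.val) * (pplus - p) := by
  intro s hn hPeq
  have hp1' : p < 1 := lt_of_lt_of_le hp2 hple
  have hp0 : p ≠ 0 := by
    intro h; rw [h] at hp1; exact absurd hp1 (by simp)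
  have hpt : p ≠ ∞ := (hp1'.trans (by norm_num)).ne
  have hppt : pplus ≠ ∞ := (lt_of_le_of_lt hple (by norm_num)).ne
  obtain ⟨k, hk⟩ : ∃ k, lam s.val = N₀ + k + 1 := ⟨lam s.val - N₀ - 1, by omega⟩
  set κ : ℝ≥0∞ := (1 - p) / p with hκ
  have h1pt : (1 : ℝ≥0∞) - p ≠ ∞ := ne_top_of_le_ne_top ENNReal.one_ne_top tsub_le_self
  have hκt : κ ≠ ∞ := (ENNReal.div_lt_top h1pt hp0).ne
  have hκ0 : κ ≠ 0 := by
    rw [hκ]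
    intro h
    rw [ENNReal.div_eq_zero_iff] at h
    rcases h with h | h
    · exact (tsub_pos_iff_lt.mpr hp1').ne' h
    · exact hpt h
  have hκ1 : κ ≤ 1 := by
    have h2 : (1 : ℝ≥0∞) ≤ p + p := by
      calc (1:ℝ≥0∞) = 1/2 + 1/2 := (ENNReal.add_halves 1).symm
      _ ≤ p + p := add_le_add hp1.le hp1.le
    have h3 : (1 : ℝ≥0∞) - p ≤ p := tsub_le_iff_right.mpr h2
    rw [hκ]
    exact ENNReal.div_le_of_le_mul (by rwa [one_mul])
  -- the walk hitting probabilities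
  have hμ : ∀ j : ℕ, reachProb (walkKernel p) (Set.Iic N₀) (N₀ + j) = κ ^ j :=
    fun j => mu_eq hp1 hp1' N₀ j
  -- splitting of the total mass
  set Pd : ℝ≥0∞ := Pdown P lam s.val with hPd
  set Pe : ℝ≥0∞ := Peq P lam s.val with hPe
  set Pu : ℝ≥0∞ := Pup P lam s.val with hPu
  have hR : (∑' x : {x : S // lam x + 1 < lam s.val}, P s.val x.val) = 0 := by
    rw [ENNReal.tsum_eq_zero]
    intro x
    by_contra hne
    have hpos : 0 < P s.val x.val := pos_iff_ne_zero.mpr hne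
    have hint := hlmc.1 s.val x.val hpos
    have hle2 : lam s.val ≤ lam x.val + 1 := by exact_mod_cast hint
    have := x.prop
    omega
  have hsum1 : Pd + Pe + Pu = 1 := by
    have := tsum_level_split (P s.val) lam (lam s.val)
    rw [hP s.val, hR, add_zero] at this
    exact this.symm
  have hPdt : Pd ≠ ∞ := by
    refine ne_top_of_le_ne_top ENNReal.one_ne_top ?_
    rw [← hsum1]; exact le_add_right le_self_add
  have hPet : Pe ≠ ∞ := by
    refine ne_top_of_le_ne_top ENNReal.one_ne_top ?_
    rw [← hsum1]; exact le_add_right le_add_self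
  have hPut : Pu ≠ ∞ := by
    refine ne_top_of_le_ne_top ENNReal.one_ne_top ?_
    rw [← hsum1]; exact le_add_self
  have hD0 : Pd + Pu ≠ 0 := by
    intro h
    rw [add_eq_zero] at h
    have hPe1 : Pe = 1 := by
      have := hsum1
      rw [h.1, h.2, zero_add, add_zero] at this
      exact this
    exact absurd hPe1 hPeq.ne
  have hDt : Pd + Pu ≠ ∞ := ENNReal.add_ne_top.mpr ⟨hPdt, hPut⟩
  have hdivmul : pplus * (Pd + Pu) ≤ Pu :=
    (ENNReal.le_div_iff_mul_le (Or.inl hD0) (Or.inl hDt)).mp (hdiv.2 s.val hn hPeq)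
  -- the numerator of the decreasing ratio
  set A : ℝ≥0∞ := ∑' s' : SA P {s : S | lam s ≤ N₀}, P s.val s'.val *
      reachProb (walkKernel p) (Set.Iic N₀) (lam s'.val) with hA
  have hAsplit := tsum_level_split
    (fun y : SA P {s : S | lam s ≤ N₀} => P s.val y.val *
      reachProb (walkKernel p) (Set.Iic N₀) (lam y.val))
    (fun y => lam y.val) (lam s.val)
  have hAR : (∑' x : {x : SA P {s : S | lam s ≤ N₀} // lam x.val + 1 < lam s.val},
      P s.val x.val.val * reachProb (walkKernel p) (Set.Iic N₀) (lam x.val.val)) = 0 := by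
    rw [ENNReal.tsum_eq_zero]
    intro x
    have hP0 : P s.val x.val.val = 0 := by
      by_contra hne
      have hpos : 0 < P s.val x.val.val := pos_iff_ne_zero.mpr hne
      have hint := hlmc.1 s.val x.val.val hpos
      have hle2 : lam s.val ≤ lam x.val.val + 1 := by exact_mod_cast hint
      have := x.prop
      omega
    rw [hP0, zero_mul]
  have hAD : (∑' x : {x : SA P {s : S | lam s ≤ N₀} // lam x.val + 1 = lam s.val},
      P s.val x.val.val * reachProb (walkKernel p) (Set.Iic N₀) (lam x.val.val))
      ≤ Pd * κ ^ k := by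
    have e1 : (∑' x : {x : SA P {s : S | lam s ≤ N₀} // lam x.val + 1 = lam s.val},
        P s.val x.val.val * reachProb (walkKernel p) (Set.Iic N₀) (lam x.val.val))
        = (∑' x : {x : SA P {s : S | lam s ≤ N₀} // lam x.val + 1 = lam s.val},
            P s.val x.val.val) * κ ^ k := by
      rw [← ENNReal.tsum_mul_right]
      refine tsum_congr fun x => ?_
      have hx := x.prop
      have e2 : lam x.val.val = N₀ + k := by omega
      rw [e2, hμ k]
    rw [e1]
    exact mul_le_mul_left (tsum_sa_le P {s : S | lam s ≤ N₀} (P s.val)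
      (fun y => lam y + 1 = lam s.val)) _
  have hAE : (∑' x : {x : SA P {s : S | lam s ≤ N₀} // lam x.val = lam s.val},
      P s.val x.val.val * reachProb (walkKernel p) (Set.Iic N₀) (lam x.val.val))
      ≤ Pe * κ ^ (k + 1) := by
    have e1 : (∑' x : {x : SA P {s : S | lam s ≤ N₀} // lam x.val = lam s.val},
        P s.val x.val.val * reachProb (walkKernel p) (Set.Iic N₀) (lam x.val.val))
        = (∑' x : {x : SA P {s : S | lam s ≤ N₀} // lam x.val = lam s.val},
            P s.val x.val.val) * κ ^ (k + 1) := by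
      rw [← ENNReal.tsum_mul_right]
      refine tsum_congr fun x => ?_
      have hx := x.prop
      have e2 : lam x.val.val = N₀ + (k + 1) := by omega
      rw [e2, hμ (k + 1)]
    rw [e1]
    exact mul_le_mul_left (tsum_sa_le P {s : S | lam s ≤ N₀} (P s.val)
      (fun y => lam y = lam s.val)) _
  have hAU : (∑' x : {x : SA P {s : S | lam s ≤ N₀} // lam s.val < lam x.val},
      P s.val x.val.val * reachProb (walkKernel p) (Set.Iic N₀) (lam x.val.val))
      ≤ Pu * κ ^ (k + 2) := by
    calc (∑' x : {x : SA P {s : S | lam s ≤ N₀} // lam s.val < lam x.val},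
        P s.val x.val.val * reachProb (walkKernel p) (Set.Iic N₀) (lam x.val.val))
        ≤ ∑' x : {x : SA P {s : S | lam s ≤ N₀} // lam s.val < lam x.val},
            P s.val x.val.val * κ ^ (k + 2) := by
          refine ENNReal.tsum_le_tsum fun x => ?_
          refine mul_le_mul_right ?_ _
          have hx := x.prop
          have e2 : lam x.val.val = N₀ + (lam x.val.val - N₀) := by omega
          rw [e2, hμ (lam x.val.val - N₀)]
          exact pow_le_pow_of_le_one zero_le hκ1 (by omega)
      _ = (∑' x : {x : SA P {s : S | lam s ≤ N₀} // lam s.val < lam x.val},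
            P s.val x.val.val) * κ ^ (k + 2) := ENNReal.tsum_mul_right
      _ ≤ Pu * κ ^ (k + 2) :=
          mul_le_mul_left (tsum_sa_le P {s : S | lam s ≤ N₀} (P s.val)
            (fun y => lam s.val < lam y)) _
  have hAle : A ≤ Pd * κ ^ k + Pe * κ ^ (k + 1) + Pu * κ ^ (k + 2) := by
    rw [hA, hAsplit, hAR, add_zero]
    exact add_le_add (add_le_add hAD hAE) hAU
  -- the decreasing ratio
  have hden : reachProb (walkKernel p) (Set.Iic N₀) (lam s.val) = κ ^ (k + 1) := by
    have e : lam s.val = N₀ + (k + 1) := by omega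
    rw [e, hμ (k + 1)]
  have hratio_eq : hRatio P {s : S | lam s ≤ N₀} (walkKernel p) (Set.Iic N₀)
      (fun y => lam y.val) s = A / κ ^ (k + 1) := by
    simp only [hRatio]
    rw [hden, ← hA]
  set B : ℝ≥0∞ := (Pd * κ ^ k + Pe * κ ^ (k + 1) + Pu * κ ^ (k + 2)) / κ ^ (k + 1) with hB
  have hratio_le : hRatio P {s : S | lam s ≤ N₀} (walkKernel p) (Set.Iic N₀)
      (fun y => lam y.val) s ≤ B := by
    rw [hratio_eq, hB]
    exact ENNReal.div_le_div_right hAle _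
  set X : ℝ≥0∞ := (2 * p - 1) / ((1 - p) * p) * (Pd + Pu) * (pplus - p) with hX
  -- finiteness
  have hq1t : (2 * p - 1) / ((1 - p) * p) ≠ ∞ := by
    refine (ENNReal.div_lt_top ?_ ?_).ne
    · exact ne_top_of_le_ne_top (ENNReal.mul_ne_top (by norm_num) hpt) tsub_le_self
    · exact mul_ne_zero (tsub_pos_iff_lt.mpr hp1').ne' hp0
  have hXt : X ≠ ∞ := by
    rw [hX]
    exact ENNReal.mul_ne_top (ENNReal.mul_ne_top hq1t hDt)
      (ne_top_of_le_ne_top hppt tsub_le_self)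
  have hnumt : Pd * κ ^ k + Pe * κ ^ (k + 1) + Pu * κ ^ (k + 2) ≠ ∞ := by
    refine ENNReal.add_ne_top.mpr ⟨ENNReal.add_ne_top.mpr ⟨?_, ?_⟩, ?_⟩
    · exact ENNReal.mul_ne_top hPdt (ENNReal.pow_ne_top hκt)
    · exact ENNReal.mul_ne_top hPet (ENNReal.pow_ne_top hκt)
    · exact ENNReal.mul_ne_top hPut (ENNReal.pow_ne_top hκt)
  have hBt : B ≠ ∞ := by
    rw [hB]
    exact (ENNReal.div_lt_top hnumt (pow_ne_zero _ hκ0)).ne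
  -- real versions
  set r : ℝ := p.toReal with hr
  set q : ℝ := pplus.toReal with hqdef
  set c : ℝ := κ.toReal with hcdef
  have hr1 : r < 1 := by
    have := (ENNReal.toReal_lt_toReal hpt (by norm_num : (1:ℝ≥0∞) ≠ ∞)).mpr hp1'
    simpa using this
  have hr2 : 1 / 2 < r := by
    have := (ENNReal.toReal_lt_toReal (by norm_num : (1:ℝ≥0∞)/2 ≠ ∞) hpt).mpr hp1
    simpa [ENNReal.toReal_div] using this
  have hr0 : (0:ℝ) < r := by linarith
  have hc : c = (1 - r) / r := by
    rw [hcdef, hκ, ENNReal.toReal_div, ENNReal.toReal_sub_of_le hp1'.le (by norm_num)]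
    simp [hr]
  have hc0 : (0:ℝ) < c := ENNReal.toReal_pos hκ0 hκt
  have hqle : q ≤ 1 := by
    have := ENNReal.toReal_mono (by norm_num : (1:ℝ≥0∞) ≠ ∞) hple
    simpa using this
  have hrq : r < q := (ENNReal.toReal_lt_toReal hpt hppt).mpr hp2
  have hXr : X.toReal = (2 * r - 1) / ((1 - r) * r) * (Pd.toReal + Pu.toReal) * (q - r) := by
    rw [hX, ENNReal.toReal_mul, ENNReal.toReal_mul, ENNReal.toReal_div,
      ENNReal.toReal_sub_of_le (two_p_ge_one hp1).le (ENNReal.mul_ne_top (by norm_num) hpt),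
      ENNReal.toReal_mul, ENNReal.toReal_mul,
      ENNReal.toReal_sub_of_le hp1'.le (by norm_num),
      ENNReal.toReal_add hPdt hPut,
      ENNReal.toReal_sub_of_le hp2.le hppt]
    norm_num
    rfl
  have hBr : B.toReal = Pd.toReal / c + Pe.toReal + Pu.toReal * c := by
    rw [hB, ENNReal.toReal_div, ENNReal.toReal_add (ENNReal.add_ne_top.mpr
        ⟨ENNReal.mul_ne_top hPdt (ENNReal.pow_ne_top hκt),
         ENNReal.mul_ne_top hPet (ENNReal.pow_ne_top hκt)⟩)
        (ENNReal.mul_ne_top hPut (ENNReal.pow_ne_top hκt)),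
      ENNReal.toReal_add (ENNReal.mul_ne_top hPdt (ENNReal.pow_ne_top hκt))
        (ENNReal.mul_ne_top hPet (ENNReal.pow_ne_top hκt)),
      ENNReal.toReal_mul, ENNReal.toReal_mul, ENNReal.toReal_mul,
      ENNReal.toReal_pow, ENNReal.toReal_pow, ENNReal.toReal_pow]
    have hcne : c ≠ 0 := hc0.ne'
    rw [← hcdef]
    field_simp
    ring
  have hsumr : Pd.toReal + Pe.toReal + Pu.toReal = 1 := by
    have := congrArg ENNReal.toReal hsum1
    rwa [ENNReal.toReal_add (ENNReal.add_ne_top.mpr ⟨hPdt, hPet⟩) hPut,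
      ENNReal.toReal_add hPdt hPet, ENNReal.toReal_one] at this
  have hdivr : q * (Pd.toReal + Pu.toReal) ≤ Pu.toReal := by
    have := ENNReal.toReal_mono hPut hdivmul
    rwa [ENNReal.toReal_mul, ENNReal.toReal_add hPdt hPut] at this
  have hXB : X + B ≤ 1 := by
    refine (ENNReal.toReal_le_toReal (ENNReal.add_ne_top.mpr ⟨hXt, hBt⟩)
      (by norm_num)).mp ?_
    rw [ENNReal.toReal_add hXt hBt, ENNReal.toReal_one, hXr, hBr, hc]
    exact real_ineq r q Pd.toReal Pe.toReal Pu.toReal hr2 hr1 hqle hrq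
      ENNReal.toReal_nonneg ENNReal.toReal_nonneg ENNReal.toReal_nonneg hsumr hdivr
  have hXh : X + hRatio P {s : S | lam s ≤ N₀} (walkKernel p) (Set.Iic N₀)
      (fun y => lam y.val) s ≤ 1 :=
    le_trans (add_le_add_right hratio_le X) hXB
  have hht : hRatio P {s : S | lam s ≤ N₀} (walkKernel p) (Set.Iic N₀)
      (fun y => lam y.val) s ≠ ∞ := by
    refine ne_top_of_le_ne_top (by norm_num : (1:ℝ≥0∞) ≠ ∞) ?_
    exact le_trans le_add_self hXh
  constructor
  · exact ENNReal.le_sub_of_add_le_right hht hXh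
  · rw [pos_iff_ne_zero]
    refine mul_ne_zero (mul_ne_zero ?_ hD0) (tsub_pos_iff_lt.mpr hp2).ne'
    exact (ENNReal.div_pos (tsub_pos_iff_lt.mpr (two_p_ge_one hp1)).ne'
      (ENNReal.mul_ne_top h1pt hpt)).ne'


end Thms
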